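/- In the two-star gadget instance, the shortest-path oblivious routing template has total reserved capacity cost n²(1 − 1/n) = n² − n, while the tree template consisting of the two stars and the bridge edge has cost at most 2 (reserving one unit on the bridge and on each star edge), so the ratio RND_SP/RND_TR is Ω(n²). -/

import Mathlib

open Finset

/-- The demand universe of the two-star gadget instance: the convex hull of the
`n²` unit demand matrices `D^{ij}` placing one unit of demand between `vᵢ` and
`v'ⱼ` (a matrix `D : Fin n → Fin n → ℝ` records the demand `D i j` between `vᵢ`
and `v'ⱼ`). -/
noncomputable def gadgetDemands (n : ℕ) : Set (Fin n → Fin n → ℝ) :=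
  convexHull ℝ {M | ∃ i j : Fin n,
    M = fun k l => if k = i ∧ l = j then (1 : ℝ) else 0}

/-- The cost of the shortest-path template on the two-star gadget: each demand
`vᵢ v'ⱼ` is routed on the direct edge of cost `1 − 1/n`, whose required capacity
is the maximum of `D i j` over the demand universe. -/
noncomputable def spCost (n : ℕ) : ℝ :=
  ∑ i : Fin n, ∑ j : Fin n,
    (1 - 1 / (n : ℝ)) * sSup {x | ∃ D ∈ gadgetDemands n, x = D i j}

/-- The cost of the tree template consisting of the two stars and the bridge:
the bridge edge `ab` has cost `1`, each star edge has cost `1/(2n)`, and the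
required capacity of each tree edge is the maximum total demand routed through
it over the demand universe. -/
noncomputable def trCost (n : ℕ) : ℝ :=
  1 * sSup {x | ∃ D ∈ gadgetDemands n, x = ∑ i : Fin n, ∑ j : Fin n, D i j}
  + ∑ i : Fin n, 1 / (2 * (n : ℝ)) *
      sSup {x | ∃ D ∈ gadgetDemands n, x = ∑ j : Fin n, D i j}
  + ∑ j : Fin n, 1 / (2 * (n : ℝ)) *
      sSup {x | ∃ D ∈ gadgetDemands n, x = ∑ i : Fin n, D i j}

lemma gadget_sup_eq_one (n : ℕ) (f : (Fin n → Fin n → ℝ) →ₗ[ℝ] ℝ)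
    (hub : ∀ i j : Fin n,
      f (fun k l => if k = i ∧ l = j then (1 : ℝ) else 0) ≤ 1)
    (hex : ∃ i j : Fin n,
      f (fun k l => if k = i ∧ l = j then (1 : ℝ) else 0) = 1) :
    sSup {x | ∃ D ∈ gadgetDemands n, x = f D} = 1 := by
  apply IsGreatest.csSup_eq
  constructor
  · obtain ⟨i, j, hij⟩ := hex
    exact ⟨_, subset_convexHull ℝ _ ⟨i, j, rfl⟩, hij.symm⟩
  · rintro x ⟨D, hD, rfl⟩
    have : gadgetDemands n ⊆ {D | f D ≤ 1} := by
      apply convexHull_min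
      · rintro M ⟨i, j, rfl⟩
        exact hub i j
      · exact convex_halfSpace_le f.isLinear 1
    exact this hD

lemma gadget_sup_entry (n : ℕ) (i j : Fin n) :
    sSup {x | ∃ D ∈ gadgetDemands n, x = D i j} = 1 := by
  have := gadget_sup_eq_one n
    ((LinearMap.proj j).comp (LinearMap.proj (R := ℝ)
      (φ := fun _ : Fin n => Fin n → ℝ) i)) ?_ ?_
  · simpa using this
  · intro i' j'; simp only [LinearMap.comp_apply, LinearMap.proj_apply]
    split_ifs <;> norm_num
  · exact ⟨i, j, by simp⟩

lemma gadget_sup_row (n : ℕ) (hn : 0 < n) (i : Fin n) :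
    sSup {x | ∃ D ∈ gadgetDemands n, x = ∑ j : Fin n, D i j} = 1 := by
  have := gadget_sup_eq_one n
    (∑ j : Fin n, (LinearMap.proj j).comp (LinearMap.proj (R := ℝ)
      (φ := fun _ : Fin n => Fin n → ℝ) i)) ?_ ?_
  · simpa using this
  · intro i' j'
    simp only [LinearMap.coe_sum, Finset.sum_apply, LinearMap.comp_apply,
      LinearMap.proj_apply]
    by_cases h : i = i'
    · subst h; simp
    · simp [h]
  · refine ⟨i, ⟨0, hn⟩, ?_⟩
    simp

lemma gadget_sup_col (n : ℕ) (hn : 0 < n) (j : Fin n) :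
    sSup {x | ∃ D ∈ gadgetDemands n, x = ∑ i : Fin n, D i j} = 1 := by
  have := gadget_sup_eq_one n
    (∑ i : Fin n, (LinearMap.proj j).comp (LinearMap.proj (R := ℝ)
      (φ := fun _ : Fin n => Fin n → ℝ) i)) ?_ ?_
  · simpa using this
  · intro i' j'
    simp only [LinearMap.coe_sum, Finset.sum_apply, LinearMap.comp_apply,
      LinearMap.proj_apply]
    by_cases h : j = j'
    · subst h; simp
    · simp [h]
  · refine ⟨⟨0, hn⟩, j, ?_⟩
    simp

lemma gadget_sup_total (n : ℕ) (hn : 0 < n) :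
    sSup {x | ∃ D ∈ gadgetDemands n,
      x = ∑ i : Fin n, ∑ j : Fin n, D i j} = 1 := by
  have := gadget_sup_eq_one n
    (∑ i : Fin n, ∑ j : Fin n, (LinearMap.proj j).comp (LinearMap.proj (R := ℝ)
      (φ := fun _ : Fin n => Fin n → ℝ) i)) ?_ ?_
  · simpa using this
  · intro i' j'
    simp only [LinearMap.coe_sum, Finset.sum_apply, LinearMap.comp_apply,
      LinearMap.proj_apply]
    simp [ite_and]
  · refine ⟨⟨0, hn⟩, ⟨0, hn⟩, ?_⟩
    simp only [LinearMap.coe_sum, Finset.sum_apply, LinearMap.comp_apply,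
      LinearMap.proj_apply]
    simp [ite_and]

/-- In the two-star gadget instance, the shortest-path template has total
reserved capacity cost `n²(1 − 1/n) = n² − n`, while the tree template has cost
at most `2`, so the ratio `RND_SP / RND_TR` is `Ω(n²)`. -/
theorem gadget_sp_vs_tree (n : ℕ) (hn : 2 ≤ n) :
    spCost n = (n : ℝ) ^ 2 * (1 - 1 / (n : ℝ)) ∧
    spCost n = (n : ℝ) ^ 2 - (n : ℝ) ∧
    trCost n ≤ 2 ∧
    (n : ℝ) ^ 2 / 4 * trCost n ≤ spCost n := by
  have hn0 : 0 < n := by omega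
  have hnR : (1 : ℝ) ≤ (n : ℝ) := by exact_mod_cast hn0
  have hsp : spCost n = (n : ℝ) ^ 2 * (1 - 1 / (n : ℝ)) := by
    unfold spCost
    simp only [gadget_sup_entry, mul_one, Finset.sum_const, Finset.card_univ,
      Fintype.card_fin, nsmul_eq_mul]
    ring
  have htr : trCost n = 2 := by
    unfold trCost
    rw [gadget_sup_total n hn0]
    simp only [gadget_sup_row n hn0, gadget_sup_col n hn0, mul_one,
      Finset.sum_const, Finset.card_univ, Fintype.card_fin, nsmul_eq_mul]
    have : (n : ℝ) ≠ 0 := by positivity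
    field_simp
    ring
  have hsp2 : spCost n = (n : ℝ) ^ 2 - (n : ℝ) := by
    rw [hsp]
    have : (n : ℝ) ≠ 0 := by positivity
    field_simp
  refine ⟨hsp, hsp2, le_of_eq htr, ?_⟩
  rw [htr, hsp2]
  have h2 : (2 : ℝ) ≤ (n : ℝ) := by exact_mod_cast hn
  nlinarith [sq_nonneg ((n : ℝ) - 2)]
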